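/- Let ω₁, ω₂ be weights, 1 < p₁, p₂ < ∞, 1/p = 1/p₁ + 1/p₂, σ_i = ω_i^{-1/(p_i-1)} ∈ L¹, and v = ω₁^{p/p₁} ω₂^{p/p₂}. Suppose f ∈ L^{p₁}(ω₁), g ∈ L^{p₂}(ω₂), and E_n(f)E_n(g) ∈ L^p(v) for all n. If for every ε > 0 there is a nonnegative y ∈ L^p(v) with sup_n (∫_Ω |E_n(f)E_n(g) χ_{{|E_n(f)E_n(g)| ≥ y}}|^p v dμ)^{1/p} ≤ ε, then ∫_Ω |E_n(f)E_n(g) - fg|^p v dμ → 0 as n → ∞. -/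

import Mathlib

open MeasureTheory Filter ENNReal Topology

noncomputable section

private lemma aux_three {p s A B C : ℝ} (hp : 0 ≤ p) (hA : 0 ≤ A) (hB : 0 ≤ B) (hC : 0 ≤ C)
    (h : |s| ≤ A + B + C) : |s| ^ p ≤ 3 ^ p * (A ^ p + B ^ p + C ^ p) := by
  set M := max A (max B C) with hM
  have hM0 : 0 ≤ M := hA.trans (le_max_left _ _)
  have h3 : |s| ≤ 3 * M := by
    have h1 : A ≤ M := le_max_left _ _
    have h2 : B ≤ M := (le_max_left _ _).trans (le_max_right _ _)
    have h4 : C ≤ M := (le_max_right _ _).trans (le_max_right _ _)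
    linarith
  have hMp : M ^ p ≤ A ^ p + B ^ p + C ^ p := by
    have hAp : 0 ≤ A ^ p := Real.rpow_nonneg hA _
    have hBp : 0 ≤ B ^ p := Real.rpow_nonneg hB _
    have hCp : 0 ≤ C ^ p := Real.rpow_nonneg hC _
    rcases max_cases A (max B C) with ⟨h1, _⟩ | ⟨h1, _⟩
    · rw [hM, h1]; linarith
    · rw [hM, h1]
      rcases max_cases B C with ⟨h2, _⟩ | ⟨h2, _⟩ <;> rw [h2] <;> linarith
  calc |s| ^ p ≤ (3 * M) ^ p := Real.rpow_le_rpow (abs_nonneg s) h3 hp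
    _ = 3 ^ p * M ^ p := Real.mul_rpow (by norm_num) hM0
    _ ≤ 3 ^ p * (A ^ p + B ^ p + C ^ p) := by
        exact mul_le_mul_of_nonneg_left hMp (Real.rpow_nonneg (by norm_num) _)

/-- truncation at level `y` -/
private def Tr (y t : ℝ) : ℝ := max (-y) (min y t)

private lemma Tr_abs_le {y t : ℝ} (hy : 0 ≤ y) : |Tr y t| ≤ y := by
  rw [abs_le, Tr]
  constructor
  · exact le_max_left _ _
  · exact max_le (neg_le_self hy) (min_le_left _ _)

private lemma Tr_sub_eq {y t : ℝ} (hy : 0 ≤ y) : |t - Tr y t| = max (|t| - y) 0 := by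
  rw [Tr]
  rcases le_or_gt t (-y) with h | h
  · have ht0 : t ≤ 0 := h.trans (neg_nonpos.2 hy)
    have h1 : min y t = t := min_eq_right (h.trans (neg_le_self hy))
    rw [h1, max_eq_left h]
    have h2 : |t| = -t := abs_of_nonpos ht0
    have h3 : |t - -y| = -(t - -y) := abs_of_nonpos (by linarith)
    rw [h3, h2, max_eq_left (by linarith)]
    ring
  · rcases le_or_gt y t with h' | h'
    · have h1 : min y t = y := min_eq_left h'
      rw [h1, max_eq_right (neg_le_self hy)]
      have h2 : |t| = t := abs_of_nonneg (hy.trans h')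
      rw [abs_of_nonneg (by linarith), h2, max_eq_left (by linarith)]
    · have h1 : min y t = t := min_eq_right h'.le
      rw [h1, max_eq_right h.le, sub_self, abs_zero]
      have : |t| < y := abs_lt.2 ⟨h, h'⟩
      rw [max_eq_right (by linarith)]

private lemma lintegral_ofReal_lt_top {Ω : Type*} [MeasurableSpace Ω] {μ : Measure Ω}
    {h : Ω → ℝ} (hI : Integrable h μ) : ∫⁻ x, ENNReal.ofReal (h x) ∂μ < ∞ := by
  calc ∫⁻ x, ENNReal.ofReal (h x) ∂μ ≤ ∫⁻ x, ‖h x‖₊ ∂μ := by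
        refine lintegral_mono fun x => ?_
        rw [← ENNReal.ofReal_coe_nnreal, coe_nnnorm, Real.norm_eq_abs]
        exact ENNReal.ofReal_le_ofReal (le_abs_self _)
    _ < ∞ := hI.2

private theorem aux_main {Ω : Type*} [MeasurableSpace Ω] {μ : Measure Ω}
    (p : ℝ) (hp0 : 0 < p)
    (U : ℕ → Ω → ℝ) (u v : Ω → ℝ)
    (hUm : ∀ n, Measurable (U n))
    (hum : AEMeasurable u μ) (hvm : AEMeasurable v μ) (hv0 : ∀ x, 0 < v x)
    (hUI : ∀ n, Integrable (fun x => |U n x| ^ p * v x) μ)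
    (haeU : ∀ᵐ x ∂μ, Tendsto (fun n => U n x) atTop (𝓝 (u x)))
    (H : ∀ ε : ℝ, 0 < ε → ∃ y : Ω → ℝ, (∀ x, 0 ≤ y x) ∧
      Integrable (fun x => y x ^ p * v x) μ ∧
      ∀ n : ℕ, (∫ x in {x | y x ≤ |U n x|}, |U n x| ^ p * v x ∂μ) ^ (1 / p) ≤ ε) :
    Tendsto (fun n => ∫ x, |U n x - u x| ^ p * v x ∂μ) atTop (𝓝 0) := by
  -- helper measurability
  have mk_meas : ∀ w : Ω → ℝ, AEMeasurable w μ →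
      AEMeasurable (fun x => ENNReal.ofReal (w x ^ p * v x)) μ := fun w hw =>
    ENNReal.measurable_ofReal.comp_aemeasurable'
      (((Real.continuous_rpow_const hp0.le).measurable.comp_aemeasurable' hw).mul hvm)
  have hInt_meas : ∀ n, AEStronglyMeasurable (fun x => |U n x - u x| ^ p * v x) μ := fun n => by
    refine AEMeasurable.aestronglyMeasurable ?_
    exact ((Real.continuous_rpow_const hp0.le).measurable.comp_aemeasurable'
      (continuous_abs.measurable.comp_aemeasurable' ((hUm n).aemeasurable.sub hum))).mul hvm
  have hnn : ∀ (w : ℝ) (x : Ω), 0 ≤ |w| ^ p * v x := fun w x =>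
    mul_nonneg (Real.rpow_nonneg (abs_nonneg _) _) (hv0 x).le
  have hrepr : ∀ n, ∫ x, |U n x - u x| ^ p * v x ∂μ
      = (∫⁻ x, ENNReal.ofReal (|U n x - u x| ^ p * v x) ∂μ).toReal := fun n =>
    integral_eq_lintegral_of_nonneg_ae (Eventually.of_forall fun x => hnn _ x) (hInt_meas n)
  suffices key : Tendsto (fun n => ∫⁻ x, ENNReal.ofReal (|U n x - u x| ^ p * v x) ∂μ)
      atTop (𝓝 0) by
    have h := (ENNReal.tendsto_toReal (by simp : (0 : ℝ≥0∞) ≠ ⊤)).comp key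
    simp only [Function.comp_def, ENNReal.toReal_zero] at h
    simpa only [hrepr] using h
  rw [ENNReal.tendsto_atTop_zero]
  intro ε hε
  -- choose δ
  obtain ⟨δ, hδ0, hδε⟩ : ∃ δ : ℝ, 0 < δ ∧
      ENNReal.ofReal (3 ^ p * (δ ^ p + δ ^ p + δ ^ p)) ≤ ε := by
    have hmin0 : (0 : ℝ≥0∞) < min ε 1 := lt_min hε zero_lt_one
    have hminT : min ε 1 ≠ ∞ := ((min_le_right _ _).trans_lt one_lt_top).ne
    have hb0 : 0 < (min ε 1).toReal / (3 ^ p * 3) := by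
      apply div_pos (ENNReal.toReal_pos hmin0.ne' hminT)
      have : (0:ℝ) < 3 ^ p := Real.rpow_pos_of_pos (by norm_num) _
      linarith
    refine ⟨((min ε 1).toReal / (3 ^ p * 3)) ^ (1 / p), Real.rpow_pos_of_pos hb0 _, ?_⟩
    have hδp : (((min ε 1).toReal / (3 ^ p * 3)) ^ (1 / p)) ^ p
        = (min ε 1).toReal / (3 ^ p * 3) := by
      rw [one_div, Real.rpow_inv_rpow hb0.le hp0.ne']
    rw [hδp]
    have h3p : (0:ℝ) < 3 ^ p := Real.rpow_pos_of_pos (by norm_num) _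
    have : (3:ℝ) ^ p * ((min ε 1).toReal / (3 ^ p * 3) + (min ε 1).toReal / (3 ^ p * 3)
        + (min ε 1).toReal / (3 ^ p * 3)) = (min ε 1).toReal := by
      field_simp; ring
    rw [this, ENNReal.ofReal_toReal hminT]
    exact min_le_left _ _
  obtain ⟨y, hy0, hyI, hyH⟩ := H δ hδ0
  -- y is a.e. measurable
  have hym : AEMeasurable y μ := by
    have h1 : AEMeasurable (fun x => y x ^ p * v x) μ := hyI.1.aemeasurable
    have h2 : AEMeasurable (fun x => y x ^ p) μ := by
      refine (h1.div hvm).congr (Eventually.of_forall fun x => ?_)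
      exact mul_div_cancel_right₀ _ (hv0 x).ne'
    have h3 := (Real.continuous_rpow_const (by positivity : (0:ℝ) ≤ 1/p)).measurable.comp_aemeasurable' h2
    refine h3.congr (Eventually.of_forall fun x => ?_)
    show (y x ^ p) ^ (1 / p) = y x
    rw [one_div, Real.rpow_rpow_inv (hy0 x) hp0.ne']
  set y' := hym.mk y with hy'def
  have hy'm : Measurable y' := hym.measurable_mk
  have hyy' : y =ᵐ[μ] y' := hym.ae_eq_mk
  -- abbreviations
  set F : ℕ → Ω → ℝ≥0∞ := fun n x => ENNReal.ofReal (max (|U n x| - y x) 0 ^ p * v x) with hF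
  set G : ℕ → Ω → ℝ≥0∞ :=
    fun n x => ENNReal.ofReal (|Tr (y x) (U n x) - Tr (y x) (u x)| ^ p * v x) with hG
  set Cf : Ω → ℝ≥0∞ := fun x => ENNReal.ofReal (max (|u x| - y x) 0 ^ p * v x) with hCf
  have absm : ∀ {w : Ω → ℝ}, AEMeasurable w μ → AEMeasurable (fun x => |w x|) μ :=
    fun hw => continuous_abs.measurable.comp_aemeasurable' hw
  have hFm : ∀ n, AEMeasurable (F n) μ := fun n =>
    mk_meas _ (((absm (hUm n).aemeasurable).sub hym).max aemeasurable_const)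
  have hTrm : ∀ (w : Ω → ℝ), AEMeasurable w μ →
      AEMeasurable (fun x => Tr (y x) (w x)) μ := fun w hw =>
    (hym.neg.max (hym.min hw))
  have hGm : ∀ n, AEMeasurable (G n) μ := fun n =>
    mk_meas _ (absm ((hTrm _ (hUm n).aemeasurable).sub (hTrm _ hum)))
  have hCm : AEMeasurable Cf μ := mk_meas _ (((absm hum).sub hym).max aemeasurable_const)
  -- bound for F n
  have hA : ∀ n, ∫⁻ x, F n x ∂μ ≤ ENNReal.ofReal (δ ^ p) := by
    intro n
    set S' : Set Ω := {x | y' x ≤ |U n x|} with hS'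
    have hS'meas : MeasurableSet S' := measurableSet_le hy'm (hUm n).abs
    have step1 : ∫⁻ x, F n x ∂μ
        ≤ ∫⁻ x, S'.indicator (fun x => ENNReal.ofReal (|U n x| ^ p * v x)) x ∂μ := by
      refine lintegral_mono_ae ?_
      filter_upwards [hyy'] with x hx
      by_cases hmem : x ∈ S'
      · rw [Set.indicator_of_mem hmem]
        refine ENNReal.ofReal_le_ofReal (mul_le_mul_of_nonneg_right ?_ (hv0 x).le)
        refine Real.rpow_le_rpow (le_max_right _ _) ?_ hp0.le
        exact max_le (sub_le_self _ (hy0 x)) (abs_nonneg _)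
      · rw [Set.indicator_of_notMem hmem]
        have hlt : |U n x| < y x := by
          rw [hx]; exact lt_of_not_ge hmem
        have : max (|U n x| - y x) 0 = 0 := max_eq_right (by linarith)
        rw [hF]; simp only [this, Real.zero_rpow hp0.ne', zero_mul, ENNReal.ofReal_zero, le_refl]
    have step2 : ∫⁻ x, S'.indicator (fun x => ENNReal.ofReal (|U n x| ^ p * v x)) x ∂μ
        = ENNReal.ofReal (∫ x in S', |U n x| ^ p * v x ∂μ) := by
      rw [lintegral_indicator hS'meas]
      exact (ofReal_integral_eq_lintegral_ofReal ((hUI n).restrict)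
        (Eventually.of_forall fun x => hnn _ x)).symm
    have hsets : S' =ᵐ[μ] {x | y x ≤ |U n x|} := by
      filter_upwards [hyy'] with x hx
      change (y' x ≤ |U n x|) = (y x ≤ |U n x|)
      rw [hx]
    have step3 : ∫ x in S', |U n x| ^ p * v x ∂μ
        = ∫ x in {x | y x ≤ |U n x|}, |U n x| ^ p * v x ∂μ := by
      rw [Measure.restrict_congr_set hsets]
    have step4 : ∫ x in {x | y x ≤ |U n x|}, |U n x| ^ p * v x ∂μ ≤ δ ^ p := by
      have h0 : 0 ≤ ∫ x in {x | y x ≤ |U n x|}, |U n x| ^ p * v x ∂μ :=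
        integral_nonneg fun x => hnn _ x
      have := Real.rpow_le_rpow (Real.rpow_nonneg h0 _) (hyH n) hp0.le
      rwa [one_div, Real.rpow_inv_rpow h0 hp0.ne'] at this
    calc ∫⁻ x, F n x ∂μ ≤ _ := step1
      _ = _ := step2
      _ ≤ ENNReal.ofReal (δ ^ p) := by
          rw [step3]; exact ENNReal.ofReal_le_ofReal step4
  -- bound for Cf via Fatou
  have hC : ∫⁻ x, Cf x ∂μ ≤ ENNReal.ofReal (δ ^ p) := by
    have step1 : ∫⁻ x, Cf x ∂μ ≤ ∫⁻ x, atTop.liminf (fun n => F n x) ∂μ := by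
      refine lintegral_mono_ae ?_
      filter_upwards [haeU] with x hx
      have htend : Tendsto (fun n => F n x) atTop (𝓝 (Cf x)) := by
        refine (ENNReal.continuous_ofReal.tendsto _).comp ?_
        refine Tendsto.mul_const _ ?_
        refine ((Real.continuous_rpow_const hp0.le).tendsto _).comp ?_
        exact (hx.abs.sub tendsto_const_nhds).max tendsto_const_nhds
      exact htend.liminf_eq.ge
    have step2 : ∫⁻ x, atTop.liminf (fun n => F n x) ∂μ
        ≤ atTop.liminf (fun n => ∫⁻ x, F n x ∂μ) := lintegral_liminf_le' hFm
    have step3 : atTop.liminf (fun n => ∫⁻ x, F n x ∂μ) ≤ ENNReal.ofReal (δ ^ p) := by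
      calc atTop.liminf (fun n => ∫⁻ x, F n x ∂μ)
          ≤ atTop.liminf (fun _ : ℕ => ENNReal.ofReal (δ ^ p)) :=
            liminf_le_liminf (Eventually.of_forall hA)
        _ = ENNReal.ofReal (δ ^ p) := liminf_const _
    exact (step1.trans step2).trans step3
  -- G tends to zero
  have hB : Tendsto (fun n => ∫⁻ x, G n x ∂μ) atTop (𝓝 0) := by
    have hbound : ∀ n, G n ≤ᵐ[μ] fun x => ENNReal.ofReal ((2 * y x) ^ p * v x) := by
      intro n
      refine Eventually.of_forall fun x => ?_
      refine ENNReal.ofReal_le_ofReal (mul_le_mul_of_nonneg_right ?_ (hv0 x).le)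
      refine Real.rpow_le_rpow (abs_nonneg _) ?_ hp0.le
      calc |Tr (y x) (U n x) - Tr (y x) (u x)|
          ≤ |Tr (y x) (U n x)| + |Tr (y x) (u x)| := abs_sub _ _
        _ ≤ y x + y x := add_le_add (Tr_abs_le (hy0 x)) (Tr_abs_le (hy0 x))
        _ = 2 * y x := by ring
    have hfin : ∫⁻ x, ENNReal.ofReal ((2 * y x) ^ p * v x) ∂μ < ∞ := by
      have heq : ∀ x, (2 * y x) ^ p * v x = 2 ^ p * (y x ^ p * v x) := fun x => by
        rw [Real.mul_rpow (by norm_num) (hy0 x)]; ring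
      have h2p : (0:ℝ) ≤ 2 ^ p := Real.rpow_nonneg (by norm_num) _
      calc ∫⁻ x, ENNReal.ofReal ((2 * y x) ^ p * v x) ∂μ
          = ∫⁻ x, ENNReal.ofReal (2 ^ p) * ENNReal.ofReal (y x ^ p * v x) ∂μ := by
            refine lintegral_congr fun x => ?_
            rw [heq x, ENNReal.ofReal_mul h2p]
        _ = ENNReal.ofReal (2 ^ p) * ∫⁻ x, ENNReal.ofReal (y x ^ p * v x) ∂μ :=
            lintegral_const_mul' _ _ ENNReal.ofReal_ne_top
        _ < ∞ := ENNReal.mul_lt_top ENNReal.ofReal_lt_top (lintegral_ofReal_lt_top hyI)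
    have hlim : ∀ᵐ x ∂μ, Tendsto (fun n => G n x) atTop (𝓝 ((fun _ : Ω => (0:ℝ≥0∞)) x)) := by
      filter_upwards [haeU] with x hx
      have htend : Tendsto (fun n => G n x) atTop
          (𝓝 (ENNReal.ofReal (|Tr (y x) (u x) - Tr (y x) (u x)| ^ p * v x))) := by
        refine (ENNReal.continuous_ofReal.tendsto _).comp ?_
        refine Tendsto.mul_const _ ?_
        refine ((Real.continuous_rpow_const hp0.le).tendsto _).comp ?_
        refine Tendsto.abs ?_
        refine Tendsto.sub ?_ tendsto_const_nhds
        exact tendsto_const_nhds.max (tendsto_const_nhds.min hx)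
      simpa only [sub_self, abs_zero, Real.zero_rpow hp0.ne', zero_mul,
        ENNReal.ofReal_zero] using htend
    have := tendsto_lintegral_of_dominated_convergence' _ hGm hbound hfin.ne hlim
    simpa only [lintegral_zero] using this
  -- master pointwise bound
  have hmaster : ∀ n, ∫⁻ x, ENNReal.ofReal (|U n x - u x| ^ p * v x) ∂μ
      ≤ ENNReal.ofReal (3 ^ p) *
        ((∫⁻ x, F n x ∂μ) + (∫⁻ x, G n x ∂μ) + ∫⁻ x, Cf x ∂μ) := by
    intro n
    have hpt : ∀ x, ENNReal.ofReal (|U n x - u x| ^ p * v x)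
        ≤ ENNReal.ofReal (3 ^ p) * (F n x + G n x + Cf x) := by
      intro x
      set a := max (|U n x| - y x) 0 with ha
      set b := |Tr (y x) (U n x) - Tr (y x) (u x)| with hb
      set c := max (|u x| - y x) 0 with hc
      have ha0 : 0 ≤ a := le_max_right _ _
      have hb0 : 0 ≤ b := abs_nonneg _
      have hc0 : 0 ≤ c := le_max_right _ _
      have hdec : |U n x - u x| ≤ a + b + c := by
        have e : U n x - u x = (U n x - Tr (y x) (U n x))
            + (Tr (y x) (U n x) - Tr (y x) (u x)) + (Tr (y x) (u x) - u x) := by ring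
        rw [e]
        refine (abs_add_three _ _ _).trans ?_
        have e1 : |U n x - Tr (y x) (U n x)| = a := Tr_sub_eq (hy0 x)
        have e3 : |Tr (y x) (u x) - u x| = c := by
          rw [abs_sub_comm]; exact Tr_sub_eq (hy0 x)
        rw [e1, e3]
      have hreal : |U n x - u x| ^ p * v x
          ≤ 3 ^ p * (a ^ p * v x + b ^ p * v x + c ^ p * v x) := by
        have h1 := mul_le_mul_of_nonneg_right
          (aux_three hp0.le ha0 hb0 hc0 hdec) (hv0 x).le
        calc |U n x - u x| ^ p * v x ≤ 3 ^ p * (a ^ p + b ^ p + c ^ p) * v x := h1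
          _ = 3 ^ p * (a ^ p * v x + b ^ p * v x + c ^ p * v x) := by ring
      have hprodnn : ∀ t : ℝ, 0 ≤ t → 0 ≤ t ^ p * v x := fun t ht =>
        mul_nonneg (Real.rpow_nonneg ht _) (hv0 x).le
      calc ENNReal.ofReal (|U n x - u x| ^ p * v x)
          ≤ ENNReal.ofReal (3 ^ p * (a ^ p * v x + b ^ p * v x + c ^ p * v x)) :=
            ENNReal.ofReal_le_ofReal hreal
        _ = ENNReal.ofReal (3 ^ p) * (F n x + G n x + Cf x) := by
            rw [ENNReal.ofReal_mul (Real.rpow_nonneg (by norm_num) _)]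
            congr 1
            rw [ENNReal.ofReal_add (add_nonneg (hprodnn _ ha0) (hprodnn _ hb0)) (hprodnn _ hc0),
              ENNReal.ofReal_add (hprodnn _ ha0) (hprodnn _ hb0)]
    calc ∫⁻ x, ENNReal.ofReal (|U n x - u x| ^ p * v x) ∂μ
        ≤ ∫⁻ x, ENNReal.ofReal (3 ^ p) * (F n x + G n x + Cf x) ∂μ :=
          lintegral_mono hpt
      _ = ENNReal.ofReal (3 ^ p) * ∫⁻ x, F n x + G n x + Cf x ∂μ :=
          lintegral_const_mul' _ _ ENNReal.ofReal_ne_top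
      _ = ENNReal.ofReal (3 ^ p) *
          ((∫⁻ x, F n x ∂μ) + (∫⁻ x, G n x ∂μ) + ∫⁻ x, Cf x ∂μ) := by
          rw [lintegral_add_right' _ hCm, lintegral_add_right' _ (hGm n)]
  -- conclude
  have hδpos : (0:ℝ≥0∞) < ENNReal.ofReal (δ ^ p) :=
    ENNReal.ofReal_pos.2 (Real.rpow_pos_of_pos hδ0 _)
  have hBev : ∀ᶠ n in atTop, ∫⁻ x, G n x ∂μ < ENNReal.ofReal (δ ^ p) :=
    hB.eventually (gt_mem_nhds hδpos)
  obtain ⟨N, hN⟩ := eventually_atTop.1 hBev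
  refine ⟨N, fun n hn => ?_⟩
  calc ∫⁻ x, ENNReal.ofReal (|U n x - u x| ^ p * v x) ∂μ
      ≤ ENNReal.ofReal (3 ^ p) *
        ((∫⁻ x, F n x ∂μ) + (∫⁻ x, G n x ∂μ) + ∫⁻ x, Cf x ∂μ) := hmaster n
    _ ≤ ENNReal.ofReal (3 ^ p) * (ENNReal.ofReal (δ ^ p) + ENNReal.ofReal (δ ^ p)
        + ENNReal.ofReal (δ ^ p)) := by
        gcongr
        · exact hA n
        · exact (hN n hn).le
    _ = ENNReal.ofReal (3 ^ p * (δ ^ p + δ ^ p + δ ^ p)) := by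
        have hδpnn : (0:ℝ) ≤ δ ^ p := Real.rpow_nonneg hδ0.le _
        rw [ENNReal.ofReal_mul (Real.rpow_nonneg (by norm_num) _),
          ENNReal.ofReal_add (add_nonneg hδpnn hδpnn) hδpnn, ENNReal.ofReal_add hδpnn hδpnn]
    _ ≤ ε := hδε

theorem stmt_11
    {Ω : Type*} {m0 : MeasurableSpace Ω} {μ : Measure Ω} [IsProbabilityMeasure μ]
    (ℱ : Filtration ℕ m0) (hgen : m0 = ⨆ n, ℱ n)
    (ω₁ ω₂ v : Ω → ℝ)
    (hω₁ : ∀ x, 0 < ω₁ x) (hω₂ : ∀ x, 0 < ω₂ x)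
    (hω₁I : Integrable ω₁ μ) (hω₂I : Integrable ω₂ μ)
    (p p₁ p₂ : ℝ) (hp₁ : 1 < p₁) (hp₂ : 1 < p₂)
    (hp : 1 / p = 1 / p₁ + 1 / p₂)
    (hσ₁I : Integrable (fun x => ω₁ x ^ (-(1 / (p₁ - 1)))) μ)
    (hσ₂I : Integrable (fun x => ω₂ x ^ (-(1 / (p₂ - 1)))) μ)
    (hvdef : v = fun x => ω₁ x ^ (p / p₁) * ω₂ x ^ (p / p₂))
    (f g : Ω → ℝ)
    (hfI : Integrable f μ) (hfL : Integrable (fun x => |f x| ^ p₁ * ω₁ x) μ)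
    (hgI : Integrable g μ) (hgL : Integrable (fun x => |g x| ^ p₂ * ω₂ x) μ)
    (hfg : ∀ n : ℕ, Integrable (fun x => |(μ[f|ℱ n]) x * (μ[g|ℱ n]) x| ^ p * v x) μ)
    (H : ∀ ε : ℝ, 0 < ε → ∃ y : Ω → ℝ, (∀ x, 0 ≤ y x) ∧
      Integrable (fun x => y x ^ p * v x) μ ∧
      ∀ n : ℕ,
        (∫ x in {x | y x ≤ |(μ[f|ℱ n]) x * (μ[g|ℱ n]) x|},
            |(μ[f|ℱ n]) x * (μ[g|ℱ n]) x| ^ p * v x ∂μ) ^ (1 / p) ≤ ε) :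
    Tendsto (fun n : ℕ => ∫ x, |(μ[f|ℱ n]) x * (μ[g|ℱ n]) x - f x * g x| ^ p * v x ∂μ)
      atTop (nhds 0) := by
  have hp₁0 : 0 < p₁ := lt_trans one_pos hp₁
  have hp₂0 : 0 < p₂ := lt_trans one_pos hp₂
  have hp0 : 0 < p := by
    have h1 : 0 < 1 / p := by rw [hp]; positivity
    exact one_div_pos.mp h1
  have hv0 : ∀ x, 0 < v x := by
    intro x; rw [hvdef]
    exact mul_pos (Real.rpow_pos_of_pos (hω₁ x) _) (Real.rpow_pos_of_pos (hω₂ x) _)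
  have hvm : AEMeasurable v μ := by
    rw [hvdef]
    exact ((Real.continuous_rpow_const (div_nonneg hp0.le hp₁0.le)).measurable.comp_aemeasurable'
        hω₁I.1.aemeasurable).mul
      ((Real.continuous_rpow_const (div_nonneg hp0.le hp₂0.le)).measurable.comp_aemeasurable'
        hω₂I.1.aemeasurable)
  have hconv : ∀ (w : Ω → ℝ), Integrable w μ →
      ∀ᵐ x ∂μ, Tendsto (fun n => (μ[w|ℱ n]) x) atTop (𝓝 (w x)) := by
    intro w hwI
    obtain ⟨w', hw'm, hww'⟩ : ∃ w', StronglyMeasurable w' ∧ w =ᵐ[μ] w' :=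
      ⟨hwI.1.mk w, hwI.1.stronglyMeasurable_mk, hwI.1.ae_eq_mk⟩
    have hw'I : Integrable w' μ := hwI.congr hww'
    have hw'meas : StronglyMeasurable[⨆ n, ℱ n] w' := by rw [← hgen]; exact hw'm
    have h1 := Integrable.tendsto_ae_condExp (ℱ := ℱ) hw'I hw'meas
    have h2 : ∀ᵐ x ∂μ, ∀ n, (μ[w|ℱ n]) x = (μ[w'|ℱ n]) x :=
      ae_all_iff.mpr fun n => condExp_congr_ae hww'
    filter_upwards [h1, h2, hww'] with x hx1 hx2 hx3
    rw [show (fun n => (μ[w|ℱ n]) x) = fun n => (μ[w'|ℱ n]) x from funext hx2, hx3]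
    exact hx1
  have haeU : ∀ᵐ x ∂μ, Tendsto (fun n => (μ[f|ℱ n]) x * (μ[g|ℱ n]) x) atTop
      (𝓝 (f x * g x)) := by
    filter_upwards [hconv f hfI, hconv g hgI] with x h1 h2
    exact h1.mul h2
  exact aux_main p hp0 (fun n x => (μ[f|ℱ n]) x * (μ[g|ℱ n]) x) (fun x => f x * g x) v
    (fun n => (stronglyMeasurable_condExp.mono (ℱ.le n)).measurable.mul
      (stronglyMeasurable_condExp.mono (ℱ.le n)).measurable)
    (hfI.1.aemeasurable.mul hgI.1.aemeasurable) hvm hv0 hfg haeU H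

end
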